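/- Let C be closed and convex, x ∈ C, α > 0, z(α) = x − αD⁻¹∇f(x), ζ ∈ (0,1], and w(α) ∈ 𝒫_{C,ζ}^D(x, z(α)). Then ⟨∇f(x), w(α) − x⟩ ≤ −(1/(2α))‖w(α) − x‖_D² + (ζ/(2α))[‖P_C^D(z(α)) − z(α)‖_D² − ‖x − z(α)‖_D²]. -/

import Mathlib

open RealInnerProductSpace

abbrev EucSp (n : ℕ) := EuclideanSpace ℝ (Fin n)

noncomputable def dipr {n : ℕ} (D : Matrix (Fin n) (Fin n) ℝ) (x y : EucSp n) : ℝ :=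
  ⟪(Matrix.toEuclideanLin D) x, y⟫

noncomputable def dnorm {n : ℕ} (D : Matrix (Fin n) (Fin n) ℝ) (x : EucSp n) : ℝ :=
  Real.sqrt (dipr D x x)

/-- `p` is the exact projection of `v` onto `C` in the `D`-norm. -/
def IsDProj {n : ℕ} (D : Matrix (Fin n) (Fin n) ℝ) (C : Set (EucSp n)) (v p : EucSp n) : Prop :=
  p ∈ C ∧ ∀ z ∈ C, dnorm D (p - v) ≤ dnorm D (z - v)

lemma dipr_nonneg {n : ℕ} {D : Matrix (Fin n) (Fin n) ℝ} (hD : D.PosDef) (v : EucSp n) :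
    0 ≤ dipr D v v := by
  rw [dipr, EuclideanSpace.inner_eq_star_dotProduct, Matrix.ofLp_toEuclideanLin_apply,
    star_trivial]
  simpa using hD.posSemidef.dotProduct_mulVec_nonneg v.ofLp

lemma dnorm_sq {n : ℕ} {D : Matrix (Fin n) (Fin n) ℝ} (hD : D.PosDef) (v : EucSp n) :
    (dnorm D v) ^ 2 = dipr D v v := Real.sq_sqrt (dipr_nonneg hD v)

lemma dipr_symm {n : ℕ} {D : Matrix (Fin n) (Fin n) ℝ} (hD : D.PosDef) (a b : EucSp n) :
    dipr D a b = dipr D b a := by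
  have hsym := (Matrix.isHermitian_iff_isSymmetric.mp hD.1)
  unfold dipr
  rw [hsym a b, real_inner_comm]

theorem stmt9 {n : ℕ} (C : Set (EucSp n)) (hcl : IsClosed C) (hconv : Convex ℝ C)
    (D : Matrix (Fin n) (Fin n) ℝ) (hD : D.PosDef)
    (f : EucSp n → ℝ) (g : EucSp n → EucSp n) (hf : ∀ x, HasGradientAt f (g x) x)
    (x : EucSp n) (hx : x ∈ C) (α : ℝ) (hα : 0 < α) (ζ : ℝ) (hζ : 0 < ζ ∧ ζ ≤ 1)
    (z : EucSp n) (hz : z = x - α • (Matrix.toEuclideanLin D⁻¹) (g x))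
    (p : EucSp n) (hp : IsDProj D C z p)
    (w : EucSp n) (hwC : w ∈ C)
    (hw : (dnorm D (w - z)) ^ 2 ≤
      ζ * (dnorm D (p - z)) ^ 2 + (1 - ζ) * (dnorm D (x - z)) ^ 2) :
    ⟪g x, w - x⟫ ≤ -(1 / (2 * α)) * (dnorm D (w - x)) ^ 2 +
      (ζ / (2 * α)) * ((dnorm D (p - z)) ^ 2 - (dnorm D (x - z)) ^ 2) := by
  have hsym := (Matrix.isHermitian_iff_isSymmetric.mp hD.1)
  have hxz : x - z = α • (Matrix.toEuclideanLin D⁻¹) (g x) := by rw [hz]; abel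
  have hDD : Matrix.toEuclideanLin D ((Matrix.toEuclideanLin D⁻¹) (g x)) = g x := by
    have hDinv : D * D⁻¹ = 1 := Matrix.mul_nonsing_inv D hD.det_pos.ne'.isUnit
    simp [Matrix.toEuclideanLin_apply, Matrix.mulVec_mulVec, hDinv]
  have hcross : dipr D (w - x) (x - z) = α * ⟪g x, w - x⟫ := by
    rw [hxz, dipr, inner_smul_right, hsym, hDD, real_inner_comm]
  have hexp : dipr D (w - z) (w - z)
      = dipr D (w - x) (w - x) + 2 * (α * ⟪g x, w - x⟫) + dipr D (x - z) (x - z) := by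
    have h1 : w - z = (w - x) + (x - z) := by abel
    have h2 := dipr_symm hD (x - z) (w - x)
    rw [h1]
    simp only [dipr, map_add, inner_add_left, inner_add_right] at *
    rw [h2, hcross]
    ring
  rw [dnorm_sq hD, dnorm_sq hD, dnorm_sq hD] at hw
  rw [dnorm_sq hD, dnorm_sq hD, dnorm_sq hD]
  rw [hexp] at hw
  have h2α : 0 < 2 * α := by linarith
  rw [← sub_nonneg]
  have key : -(1 / (2 * α)) * dipr D (w - x) (w - x) +
      ζ / (2 * α) * (dipr D (p - z) (p - z) - dipr D (x - z) (x - z)) - ⟪g x, w - x⟫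
      = (ζ * dipr D (p - z) (p - z) + (1 - ζ) * dipr D (x - z) (x - z)
        - (dipr D (w - x) (w - x) + 2 * (α * ⟪g x, w - x⟫) + dipr D (x - z) (x - z))) / (2 * α) := by
    field_simp
    ring
  rw [key]
  exact div_nonneg (by linarith) (le_of_lt h2α)
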